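/- Suppose f : D₁ → D₂ preserves a distance d (d_{D₂}(f(x), f(y)) = d_{D₁}(x, y)) and the following estimates hold for sequences p^j, t^j ∈ D₁ with a_j = dist(p^j, ∂D₁) → 0, b_j = dist(t^j, ∂D₁) → 0, |p^j − t^j| → 0: (Upper) d_{D₁}(p^j, t^j) ≤ −(1/2)log a_j + (1/2)log(a_j + |p^j−t^j|) + (1/2)log(b_j + |p^j−t^j|) − (1/2)log b_j + C₁; (Lower) d_{D₂}(f(p^j), f(t^j)) ≥ −(1/2)log dist(f(p^j), ∂D₂) − (1/2)log dist(f(t^j), ∂D₂) − C₂; (Comparison) dist(f(p^j), ∂D₂) ≤ C₃·a_j and dist(f(t^j), ∂D₂) ≤ C₃·b_j. Then one reaches a contradiction: no such sequences can exist. -/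

import Mathlib

open Metric Filter

/-- The full contradiction argument of Theorem 1: a distance-preserving map
`f : D₁ → D₂` cannot satisfy simultaneously the upper estimate on `d_{D₁}`, the
lower estimate on `d_{D₂}` and the boundary-distance comparison along sequences
`p^j, t^j` approaching `∂D₁` with `|p^j − t^j| → 0`. -/
theorem stmt_19 {n : ℕ} (D₁ D₂ : Set (EuclideanSpace ℂ (Fin n)))
    (dD₁ dD₂ : EuclideanSpace ℂ (Fin n) → EuclideanSpace ℂ (Fin n) → ℝ)
    (f : EuclideanSpace ℂ (Fin n) → EuclideanSpace ℂ (Fin n))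
    (hiso : ∀ x ∈ D₁, ∀ y ∈ D₁, dD₂ (f x) (f y) = dD₁ x y)
    (p t : ℕ → EuclideanSpace ℂ (Fin n))
    (hpD : ∀ j, p j ∈ D₁) (htD : ∀ j, t j ∈ D₁)
    (a b : ℕ → ℝ)
    (hadef : ∀ j, a j = infDist (p j) (frontier D₁))
    (hbdef : ∀ j, b j = infDist (t j) (frontier D₁))
    (hapos : ∀ j, 0 < a j) (hbpos : ∀ j, 0 < b j)
    (ha0 : Tendsto a atTop (nhds 0)) (hb0 : Tendsto b atTop (nhds 0))
    (hc0 : Tendsto (fun j => dist (p j) (t j)) atTop (nhds 0))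
    (hfp : ∀ j, 0 < infDist (f (p j)) (frontier D₂))
    (hft : ∀ j, 0 < infDist (f (t j)) (frontier D₂))
    (C₁ C₂ C₃ : ℝ) (hC₃ : 0 < C₃)
    (hupper : ∀ j, dD₁ (p j) (t j) ≤
      -(1/2) * Real.log (a j) + (1/2) * Real.log (a j + dist (p j) (t j))
      + (1/2) * Real.log (b j + dist (p j) (t j)) - (1/2) * Real.log (b j) + C₁)
    (hlower : ∀ j, dD₂ (f (p j)) (f (t j)) ≥
      -(1/2) * Real.log (infDist (f (p j)) (frontier D₂))
      - (1/2) * Real.log (infDist (f (t j)) (frontier D₂)) - C₂)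
    (hcomp₁ : ∀ j, infDist (f (p j)) (frontier D₂) ≤ C₃ * a j)
    (hcomp₂ : ∀ j, infDist (f (t j)) (frontier D₂) ≤ C₃ * b j) :
    False := by
  -- key pointwise inequality
  have key : ∀ j, -(C₁ + C₂ + Real.log C₃) ≤ (1/2) * Real.log (a j + dist (p j) (t j))
      + (1/2) * Real.log (b j + dist (p j) (t j)) := by
    intro j
    have h1 : dD₂ (f (p j)) (f (t j)) = dD₁ (p j) (t j) :=
      hiso _ (hpD j) _ (htD j)
    have h2 := hlower j
    have h3 := hupper j
    have hlp : Real.log (infDist (f (p j)) (frontier D₂)) ≤ Real.log C₃ + Real.log (a j) := by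
      rw [← Real.log_mul (ne_of_gt hC₃) (ne_of_gt (hapos j))]
      exact Real.log_le_log (hfp j) (hcomp₁ j)
    have hlt : Real.log (infDist (f (t j)) (frontier D₂)) ≤ Real.log C₃ + Real.log (b j) := by
      rw [← Real.log_mul (ne_of_gt hC₃) (ne_of_gt (hbpos j))]
      exact Real.log_le_log (hft j) (hcomp₂ j)
    linarith [h2, h3, h1, hlp, hlt]
  -- but g tends to -infinity
  have hac : Tendsto (fun j => a j + dist (p j) (t j)) atTop (nhds 0) := by
    simpa using ha0.add hc0
  have hbc : Tendsto (fun j => b j + dist (p j) (t j)) atTop (nhds 0) := by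
    simpa using hb0.add hc0
  have hacp : ∀ j, 0 < a j + dist (p j) (t j) := fun j =>
    add_pos_of_pos_of_nonneg (hapos j) dist_nonneg
  have hbcp : ∀ j, 0 < b j + dist (p j) (t j) := fun j =>
    add_pos_of_pos_of_nonneg (hbpos j) dist_nonneg
  have hla : Tendsto (fun j => Real.log (a j + dist (p j) (t j))) atTop atBot :=
    Real.tendsto_log_nhdsGT_zero.comp
      (tendsto_nhdsWithin_of_tendsto_nhds_of_eventually_within _ hac
        (Filter.Eventually.of_forall hacp))
  have hlb : Tendsto (fun j => Real.log (b j + dist (p j) (t j))) atTop atBot :=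
    Real.tendsto_log_nhdsGT_zero.comp
      (tendsto_nhdsWithin_of_tendsto_nhds_of_eventually_within _ hbc
        (Filter.Eventually.of_forall hbcp))
  have hgbot : Tendsto (fun j => (1/2) * Real.log (a j + dist (p j) (t j))
      + (1/2) * Real.log (b j + dist (p j) (t j))) atTop atBot :=
    Tendsto.atBot_add_atBot (hla.const_mul_atBot (by norm_num : (0:ℝ) < 1/2))
      (hlb.const_mul_atBot (by norm_num : (0:ℝ) < 1/2))
  have := hgbot.eventually (eventually_lt_atBot (-(C₁ + C₂ + Real.log C₃)))
  rcases this.exists with ⟨j, hj⟩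
  exact absurd (key j) (not_le.mpr hj)
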